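/- arXiv:1109.1994 — 2 statements merged into one kernel-verified Lean document; each statement's English description precedes it below -/
import Mathlib

section
/- Let G be a finite simple graph on a nonempty vertex set V. Then the maximum of C(S) over all subsets S ⊆ V equals the maximum of C(S) over all subsets S ⊆ V whose induced subgraph G[S] is connected. In particular, the problem of finding a set of vertices with maximum cohesion is equivalent to that of finding a connected set of vertices with maximum cohesion. -/
open Finset
open scoped Classical

/-- The set of triangles of a finite simple graph `G`: 3-element vertex sets
that are pairwise adjacent. -/
noncomputable def triangles {V : Type*} [Fintype V] (G : SimpleGraph V) : Finset (Finset V) :=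
  Finset.univ.filter (fun t => t.card = 3 ∧ (t : Set V).Pairwise G.Adj)

/-- `triIn G S` is the number of triangles of `G` with all three vertices in `S`. -/
noncomputable def triIn {V : Type*} [Fintype V] (G : SimpleGraph V) (S : Finset V) : ℕ :=
  ((triangles G).filter (fun t => t ⊆ S)).card

/-- `triOut G S` is the number of triangles of `G` with exactly two vertices in `S`. -/
noncomputable def triOut {V : Type*} [Fintype V] (G : SimpleGraph V) (S : Finset V) : ℕ :=
  ((triangles G).filter (fun t => (t ∩ S).card = 2)).card

/-- The cohesion of a set of vertices `S` in `G`: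
`C(S) = i(S)² / (choose(|S|,3) · (i(S) + o(S)))`, which is `0` when the
denominator vanishes (division by zero in `ℝ`). -/
noncomputable def cohesion {V : Type*} [Fintype V] (G : SimpleGraph V) (S : Finset V) : ℝ :=
  (triIn G S : ℝ) ^ 2 / ((S.card.choose 3 : ℝ) * ((triIn G S : ℝ) + (triOut G S : ℝ)))


section Aux
set_option linter.unusedSectionVars false
lemma choose3_superadd (a b : ℕ) : a.choose 3 + b.choose 3 ≤ (a+b).choose 3 := by
  rw [Nat.add_choose_eq]
  have hsub : ({(3,0),(0,3)} : Finset (ℕ × ℕ)) ⊆ Finset.HasAntidiagonal.antidiagonal 3 := by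
    intro x hx; simp at hx; rcases hx with h | h <;> subst h <;> simp
  calc a.choose 3 + b.choose 3
      = ∑ ij ∈ ({(3,0),(0,3)} : Finset (ℕ × ℕ)), a.choose ij.1 * b.choose ij.2 := by
        simp
    _ ≤ _ := Finset.sum_le_sum_of_subset hsub

lemma cs_ineq {x N1 N2 N a1 a2 d1 d2 : ℝ} (hx : 0 ≤ x) (hN1 : 0 ≤ N1) (hN2 : 0 ≤ N2)
    (hd1 : 0 ≤ d1) (hd2 : 0 ≤ d2) (ha1 : 0 ≤ a1) (ha2 : 0 ≤ a2) (hN : N1 + N2 ≤ N)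
    (h1 : a1^2 ≤ x*(N1*d1)) (h2 : a2^2 ≤ x*(N2*d2)) :
    (a1+a2)^2 ≤ x*(N*(d1+d2)) := by
  have h3 : a1^2 * a2^2 ≤ (x*(N1*d1))*(x*(N2*d2)) :=
    mul_le_mul h1 h2 (sq_nonneg a2) (by positivity)
  have h4 : (0:ℝ) ≤ x^2*(N1*d2-N2*d1)^2 := by positivity
  have cross : (2*(a1*a2))^2 ≤ (x*(N1*d2+N2*d1))^2 := by nlinarith [h3, h4]
  have cross' : 2*(a1*a2) ≤ x*(N1*d2+N2*d1) := by
    have := Real.sqrt_le_sqrt cross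
    rwa [Real.sqrt_sq (by positivity), Real.sqrt_sq (by positivity)] at this
  nlinarith [mul_le_mul_of_nonneg_right hN (mul_nonneg hx (add_nonneg hd1 hd2))]

variable {V : Type*} [Fintype V] (G : SimpleGraph V)

lemma mem_triangles {t : Finset V} (ht : t ∈ triangles G) :
    t.card = 3 ∧ (t : Set V).Pairwise G.Adj := by
  simpa [triangles] using ht

lemma cohesion_nonneg (S : Finset V) : 0 ≤ cohesion G S := by
  unfold cohesion; positivity

lemma triIn_le_choose (S : Finset V) : triIn G S ≤ S.card.choose 3 := by
  rw [← Finset.card_powersetCard 3 S]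
  apply Finset.card_le_card
  intro t ht
  simp only [Finset.mem_filter, Finset.mem_powersetCard] at *
  exact ⟨ht.2, (mem_triangles G ht.1).1⟩

lemma triIn_le_sum (S : Finset V) : triIn G S ≤ triIn G S + triOut G S := Nat.le_add_right _ _

lemma cohesion_le_one (S : Finset V) : cohesion G S ≤ 1 := by
  unfold cohesion
  apply div_le_one_of_le₀
  · have h1 : (triIn G S : ℝ) ≤ (S.card.choose 3 : ℝ) := by exact_mod_cast triIn_le_choose G S
    have h2 : (triIn G S : ℝ) ≤ (triIn G S : ℝ) + (triOut G S : ℝ) := by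
      have : (0:ℝ) ≤ (triOut G S : ℝ) := by positivity
      linarith
    nlinarith [(by positivity : (0:ℝ) ≤ (triIn G S:ℝ))]
  · positivity

section Split
variable {A B : Finset V}

lemma tri_not_both (hdis : Disjoint A B) (hcross : ∀ a ∈ A, ∀ b ∈ B, ¬ G.Adj a b)
    {t : Finset V} (ht : t ∈ triangles G) (ha : (t ∩ A).Nonempty) (hb : (t ∩ B).Nonempty) :
    False := by
  obtain ⟨a, haa⟩ := ha
  obtain ⟨b, hbb⟩ := hb
  rw [Finset.mem_inter] at haa hbb
  have hne : a ≠ b := by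
    intro h
    exact Finset.disjoint_left.mp hdis haa.2 (h ▸ hbb.2)
  exact hcross a haa.2 b hbb.2 ((mem_triangles G ht).2 (by exact_mod_cast haa.1)
    (by exact_mod_cast hbb.1) hne)

lemma triIn_split (hdis : Disjoint A B) (hcross : ∀ a ∈ A, ∀ b ∈ B, ¬ G.Adj a b) :
    triIn G (A ∪ B) = triIn G A + triIn G B := by
  unfold triIn
  rw [← Finset.card_union_of_disjoint, ← Finset.filter_or]
  · congr 1
    apply Finset.filter_congr
    intro t ht

    constructor
    · intro hsub
      have hne : t.Nonempty := by
        rw [← Finset.card_pos, (mem_triangles G ht).1]; norm_num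
      by_cases hB : (t ∩ B).Nonempty
      · right
        intro x hx
        rcases Finset.mem_union.mp (hsub hx) with h | h
        · exact absurd (tri_not_both G hdis hcross ht ⟨x, Finset.mem_inter.mpr ⟨hx, h⟩⟩ hB) id
        · exact h
      · left
        intro x hx
        rcases Finset.mem_union.mp (hsub hx) with h | h
        · exact h
        · exact absurd ⟨x, Finset.mem_inter.mpr ⟨hx, h⟩⟩ hB
    · rintro (h | h) <;> intro x hx <;> simp [Finset.mem_union, h hx]
  · rw [Finset.disjoint_left]
    intro t ht1 ht2
    simp only [Finset.mem_filter] at ht1 ht2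
    have hne : t.Nonempty := by
      rw [← Finset.card_pos, (mem_triangles G ht1.1).1]; norm_num
    obtain ⟨x, hx⟩ := hne
    exact tri_not_both G hdis hcross ht1.1 ⟨x, Finset.mem_inter.mpr ⟨hx, ht1.2 hx⟩⟩
      ⟨x, Finset.mem_inter.mpr ⟨hx, ht2.2 hx⟩⟩

lemma triOut_split (hdis : Disjoint A B) (hcross : ∀ a ∈ A, ∀ b ∈ B, ¬ G.Adj a b) :
    triOut G (A ∪ B) = triOut G A + triOut G B := by
  unfold triOut
  rw [← Finset.card_union_of_disjoint, ← Finset.filter_or]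
  · congr 1
    apply Finset.filter_congr
    intro t ht
    have hinter : t ∩ (A ∪ B) = (t ∩ A) ∪ (t ∩ B) := Finset.inter_union_distrib_left t A B
    have hd : Disjoint (t ∩ A) (t ∩ B) :=
      (hdis.mono (Finset.inter_subset_right) (Finset.inter_subset_right))
    have hcard : (t ∩ (A ∪ B)).card = (t ∩ A).card + (t ∩ B).card := by
      rw [hinter, Finset.card_union_of_disjoint hd]
    have hzero : (t ∩ A).card = 0 ∨ (t ∩ B).card = 0 := by
      by_contra hc
      push_neg at hc
      exact tri_not_both G hdis hcross ht
        (Finset.card_pos.mp (Nat.pos_of_ne_zero hc.1))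
        (Finset.card_pos.mp (Nat.pos_of_ne_zero hc.2))

    constructor
    · intro h
      rcases hzero with h0 | h0
      · right; omega
      · left; omega
    · rintro (h | h) <;> rcases hzero with h0 | h0 <;> omega
  · rw [Finset.disjoint_left]
    intro t ht1 ht2
    simp only [Finset.mem_filter] at ht1 ht2
    refine tri_not_both G hdis hcross ht1.1 ?_ ?_ <;> rw [← Finset.card_pos] <;> omega

end Split

lemma sq_triIn_le (S : Finset V) :
    (triIn G S : ℝ)^2 ≤
      cohesion G S * ((S.card.choose 3 : ℝ) * ((triIn G S : ℝ) + (triOut G S : ℝ))) := by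
  by_cases hD : ((S.card.choose 3 : ℝ) * ((triIn G S : ℝ) + (triOut G S : ℝ))) = 0
  · have hi : (triIn G S : ℝ) = 0 := by
      rcases mul_eq_zero.mp hD with h | h
      · have h' : S.card.choose 3 = 0 := by exact_mod_cast h
        have := triIn_le_choose G S
        have : triIn G S = 0 := by omega
        exact_mod_cast this
      · have h1 : (0:ℝ) ≤ (triIn G S : ℝ) := by positivity
        have h2 : (0:ℝ) ≤ (triOut G S : ℝ) := by positivity
        linarith
    rw [hi]
    have : cohesion G S * ((S.card.choose 3 : ℝ) * ((0:ℝ) + (triOut G S : ℝ))) = 0 := by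
      have := hi ▸ hD
      rw [this, mul_zero]
    rw [this]
    norm_num
  · rw [cohesion, div_mul_cancel₀ _ hD]

lemma singleton_connected (v : V) : (G.induce (({v} : Finset V) : Set V)).Connected := by
  rw [SimpleGraph.connected_iff]
  constructor
  · rintro ⟨a, ha⟩ ⟨b, hb⟩
    have heq : (⟨a, ha⟩ : ((({v} : Finset V) : Set V))) = ⟨b, hb⟩ := by
      apply Subtype.ext
      have ha' : a = v := by simpa using ha
      have hb' : b = v := by simpa using hb
      simp [ha', hb']
    rw [heq]
  · exact ⟨⟨v, by simp⟩⟩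

lemma cohesion_empty : cohesion G (∅ : Finset V) = 0 := by
  simp [cohesion]

lemma exists_connected_ge [Nonempty V] :
    ∀ n (S : Finset V), S.card ≤ n →
      ∃ T : Finset V, (G.induce (T : Set V)).Connected ∧ cohesion G S ≤ cohesion G T := by
  intro n
  induction n with
  | zero =>
    intro S hS
    have hSe : S = ∅ := Finset.card_eq_zero.mp (Nat.le_zero.mp hS)
    obtain ⟨v⟩ := ‹Nonempty V›
    exact ⟨{v}, singleton_connected G v, by
      rw [hSe, cohesion_empty]; exact cohesion_nonneg G {v}⟩
  | succ n ih =>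
    intro S hS
    by_cases hSe : S = ∅
    · obtain ⟨v⟩ := ‹Nonempty V›
      exact ⟨{v}, singleton_connected G v, by
        rw [hSe, cohesion_empty]; exact cohesion_nonneg G {v}⟩
    by_cases hconn : (G.induce (S : Set V)).Connected
    · exact ⟨S, hconn, le_refl _⟩
    -- disconnected case
    obtain ⟨v0, hv0⟩ := Finset.nonempty_of_ne_empty hSe
    have hne : Nonempty ((S : Set V)) := ⟨⟨v0, Finset.mem_coe.mpr hv0⟩⟩
    have hpre : ¬ (G.induce (S : Set V)).Preconnected := by
      intro h
      exact hconn (SimpleGraph.connected_iff _ |>.mpr ⟨h, hne⟩)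
    rw [SimpleGraph.Preconnected] at hpre
    push_neg at hpre
    obtain ⟨u, w, huw⟩ := hpre
    set A := S.filter (fun a => ∀ h : a ∈ S,
      (G.induce (S : Set V)).Reachable u ⟨a, Finset.mem_coe.mpr h⟩) with hAdef
    set B := S \ A with hBdef
    have hAS : A ⊆ S := Finset.filter_subset _ _
    have hdis : Disjoint A B := Finset.disjoint_sdiff
    have hunion : A ∪ B = S := Finset.union_sdiff_of_subset hAS
    have hcross : ∀ a ∈ A, ∀ b ∈ B, ¬ G.Adj a b := by
      intro a ha b hb hadj
      have haS : a ∈ S := hAS ha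
      have hbS : b ∈ S := (Finset.mem_sdiff.mp hb).1
      have hreach : (G.induce (S : Set V)).Reachable u ⟨a, Finset.mem_coe.mpr haS⟩ :=
        (Finset.mem_filter.mp ha).2 haS
      have hadj' : (G.induce (S : Set V)).Adj ⟨a, Finset.mem_coe.mpr haS⟩
          ⟨b, Finset.mem_coe.mpr hbS⟩ := by
        exact hadj
      have hreachb := hreach.trans hadj'.reachable
      have hbA : b ∈ A := Finset.mem_filter.mpr ⟨hbS, fun h => hreachb⟩
      exact (Finset.mem_sdiff.mp hb).2 hbA
    have huA : u.1 ∈ A := by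
      refine Finset.mem_filter.mpr ⟨Finset.mem_coe.mp u.2, fun h => ?_⟩
      have : (⟨u.1, Finset.mem_coe.mpr h⟩ : (S : Set V)) = u := Subtype.ext rfl
      rw [this]
    have hwB : w.1 ∈ B := by
      refine Finset.mem_sdiff.mpr ⟨Finset.mem_coe.mp w.2, fun hwA => ?_⟩
      have hr := (Finset.mem_filter.mp hwA).2 (Finset.mem_coe.mp w.2)
      have heq : (⟨w.1, Finset.mem_coe.mpr (Finset.mem_coe.mp w.2)⟩ : (S : Set V)) = w :=
        Subtype.ext rfl
      rw [heq] at hr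
      exact huw hr
    have hcardsum : A.card + B.card = S.card := by
      rw [← hunion, Finset.card_union_of_disjoint hdis]
    have hcardA : A.card ≤ n := by
      have hB1 : 1 ≤ B.card := Finset.card_pos.mpr ⟨w.1, hwB⟩
      omega
    have hcardB : B.card ≤ n := by
      have hA1 : 1 ≤ A.card := Finset.card_pos.mpr ⟨u.1, huA⟩
      omega
    obtain ⟨TA, hTAc, hTA⟩ := ih A hcardA
    obtain ⟨TB, hTBc, hTB⟩ := ih B hcardB
    set x := max (cohesion G TA) (cohesion G TB) with hxdef
    have hx0 : 0 ≤ x := le_trans (cohesion_nonneg G TA) (le_max_left _ _)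
    have h1 : (triIn G A : ℝ)^2 ≤
        x * ((A.card.choose 3 : ℝ) * ((triIn G A : ℝ) + (triOut G A : ℝ))) :=
      le_trans (sq_triIn_le G A)
        (mul_le_mul_of_nonneg_right (le_trans hTA (le_max_left _ _)) (by positivity))
    have h2 : (triIn G B : ℝ)^2 ≤
        x * ((B.card.choose 3 : ℝ) * ((triIn G B : ℝ) + (triOut G B : ℝ))) :=
      le_trans (sq_triIn_le G B)
        (mul_le_mul_of_nonneg_right (le_trans hTB (le_max_right _ _)) (by positivity))
    have hiS : triIn G S = triIn G A + triIn G B := by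
      rw [← hunion]; exact triIn_split G hdis hcross
    have hoS : triOut G S = triOut G A + triOut G B := by
      rw [← hunion]; exact triOut_split G hdis hcross
    have hch : (A.card.choose 3 : ℝ) + (B.card.choose 3 : ℝ) ≤ (S.card.choose 3 : ℝ) := by
      have := choose3_superadd A.card B.card
      rw [hcardsum] at this
      exact_mod_cast this
    have main : ((triIn G A : ℝ) + (triIn G B : ℝ))^2 ≤
        x * ((S.card.choose 3 : ℝ) *
          (((triIn G A : ℝ) + (triOut G A : ℝ)) + ((triIn G B : ℝ) + (triOut G B : ℝ)))) :=
      cs_ineq hx0 (by positivity) (by positivity) (by positivity) (by positivity)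
        (by positivity) (by positivity) hch (by nlinarith [h1]) (by nlinarith [h2])
    have hcoh : cohesion G S ≤ x := by
      by_cases hD : ((S.card.choose 3 : ℝ) * ((triIn G S : ℝ) + (triOut G S : ℝ))) = 0
      · rw [cohesion, hD, div_zero]; exact hx0
      · have hDpos : 0 < ((S.card.choose 3 : ℝ) * ((triIn G S : ℝ) + (triOut G S : ℝ))) := by
          rcases lt_or_eq_of_le (by positivity :
              (0:ℝ) ≤ ((S.card.choose 3 : ℝ) * ((triIn G S : ℝ) + (triOut G S : ℝ)))) with h | h
          · exact h
          · exact absurd h.symm hD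
        rw [cohesion, div_le_iff₀ hDpos]
        have e1 : (triIn G S : ℝ) = (triIn G A : ℝ) + (triIn G B : ℝ) := by
          rw [hiS]; push_cast; ring
        have e2 : (triOut G S : ℝ) = (triOut G A : ℝ) + (triOut G B : ℝ) := by
          rw [hoS]; push_cast; ring
        rw [e1, e2]
        calc ((triIn G A : ℝ) + (triIn G B : ℝ))^2 ≤ _ := main
          _ = x * ((S.card.choose 3 : ℝ) *
              ((triIn G A : ℝ) + (triIn G B : ℝ) + ((triOut G A : ℝ) + (triOut G B : ℝ)))) := by
            ring
    rcases max_cases (cohesion G TA) (cohesion G TB) with ⟨hm, _⟩ | ⟨hm, _⟩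
    · exact ⟨TA, hTAc, hcoh.trans (le_of_eq hm)⟩
    · exact ⟨TB, hTBc, hcoh.trans (le_of_eq hm)⟩

end Aux

theorem max_cohesion_eq_max_connected_cohesion {V : Type*} [Fintype V] [Nonempty V]
    (G : SimpleGraph V) :
    (⨆ S : Finset V, cohesion G S) =
      ⨆ S : {S : Finset V // (G.induce (S : Set V)).Connected}, cohesion G (S : Finset V) := by
  have hbdd1 : BddAbove (Set.range fun S : Finset V => cohesion G S) := by
    refine ⟨1, ?_⟩
    rintro _ ⟨S, rfl⟩
    exact cohesion_le_one G S
  have hbdd2 : BddAbove (Set.range fun S : {S : Finset V // (G.induce (S : Set V)).Connected} =>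
      cohesion G (S : Finset V)) := by
    refine ⟨1, ?_⟩
    rintro _ ⟨S, rfl⟩
    exact cohesion_le_one G (S : Finset V)
  obtain ⟨v⟩ := ‹Nonempty V›
  haveI hne2 : Nonempty {S : Finset V // (G.induce (S : Set V)).Connected} :=
    ⟨⟨{v}, singleton_connected G v⟩⟩
  apply le_antisymm
  · apply ciSup_le
    intro S
    obtain ⟨T, hTc, hT⟩ := exists_connected_ge G S.card S le_rfl
    exact hT.trans (le_ciSup hbdd2 ⟨T, hTc⟩)
  · apply ciSup_le
    intro S
    exact le_ciSup hbdd1 (S : Finset V)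
end

section
/- Let G be a finite simple graph and let S₁, S₂ be two disjoint sets of vertices of G, each of size at least 2, with no edge of G joining a vertex of S₁ to a vertex of S₂, and assume i(S₁ ∪ S₂) > 0. Then C(S₁ ∪ S₂) < max(C(S₁), C(S₂)); that is, splitting a disconnected set into its two disconnected parts strictly increases the cohesion of at least one part above that of the union. -/
open Finset
open scoped Classical

private lemma choose3_add_lt {m n : ℕ} (hm : 2 ≤ m) (hn : 2 ≤ n) :
    m.choose 3 + n.choose 3 < (m + n).choose 3 := by
  induction m, hm using Nat.le_induction with
  | base =>
    have h1 : 0 < (n+1).choose 2 := Nat.choose_pos (by omega)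
    have h2 : n.choose 3 ≤ (n+1).choose 3 := Nat.choose_le_choose 3 (by omega)
    have h3 : (n+2).choose 3 = (n+1).choose 2 + (n+1).choose 3 := Nat.choose_succ_succ' (n+1) 2
    have h4 : (2:ℕ).choose 3 = 0 := by decide
    have h5 : (2 + n) = n + 2 := by omega
    rw [h5]
    omega
  | succ m hm ih =>
    have pas : (m+1).choose 3 = m.choose 2 + m.choose 3 := Nat.choose_succ_succ' m 2
    have pas2 : (m+n+1).choose 3 = (m+n).choose 2 + (m+n).choose 3 := Nat.choose_succ_succ' (m+n) 2
    have hle : m.choose 2 ≤ (m+n).choose 2 := Nat.choose_le_choose 2 (by omega)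
    have e : m + 1 + n = m + n + 1 := by omega
    rw [e]
    omega

section Graph

variable {V : Type*} [Fintype V] (G : SimpleGraph V) (S₁ S₂ : Finset V)

private lemma triangle_inter_empty (hdisj : Disjoint S₁ S₂)
    (hsep : ∀ u ∈ S₁, ∀ v ∈ S₂, ¬ G.Adj u v)
    {t : Finset V} (ht : t ∈ triangles G) :
    t ∩ S₁ = ∅ ∨ t ∩ S₂ = ∅ := by
  by_contra h
  push_neg at h
  obtain ⟨h1, h2⟩ := h
  obtain ⟨u, hu⟩ := h1
  obtain ⟨v, hv⟩ := h2
  rw [Finset.mem_inter] at hu hv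
  have hne : u ≠ v := fun he => (Finset.disjoint_left.1 hdisj hu.2) (he ▸ hv.2)
  simp only [triangles, Finset.mem_filter, Finset.mem_univ, true_and] at ht
  exact hsep u hu.2 v hv.2 (ht.2 (Finset.mem_coe.2 hu.1) (Finset.mem_coe.2 hv.1) hne)

private lemma triIn_union (hdisj : Disjoint S₁ S₂)
    (hsep : ∀ u ∈ S₁, ∀ v ∈ S₂, ¬ G.Adj u v) :
    triIn G (S₁ ∪ S₂) = triIn G S₁ + triIn G S₂ := by
  unfold triIn
  have hcong : (triangles G).filter (fun t => t ⊆ S₁ ∪ S₂)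
      = (triangles G).filter (fun t => t ⊆ S₁ ∨ t ⊆ S₂) := by
    apply Finset.filter_congr
    intro t ht
    constructor
    · intro hsub
      rcases triangle_inter_empty G S₁ S₂ hdisj hsep ht with he | he
      · right
        intro x hx
        rcases Finset.mem_union.1 (hsub hx) with h | h
        · exact absurd (Finset.mem_inter.2 ⟨hx, h⟩) (by simp [he])
        · exact h
      · left
        intro x hx
        rcases Finset.mem_union.1 (hsub hx) with h | h
        · exact h
        · exact absurd (Finset.mem_inter.2 ⟨hx, h⟩) (by simp [he])
    · rintro (h | h) <;> exact h.trans (by simp)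
  rw [hcong, Finset.filter_or, Finset.card_union_of_disjoint]
  rw [Finset.disjoint_left]
  intro t ht1 ht2
  simp only [Finset.mem_filter] at ht1 ht2
  have hcard : t.card = 3 := by
    have := ht1.1
    simp only [triangles, Finset.mem_filter, Finset.mem_univ, true_and] at this
    exact this.1
  obtain ⟨u, hu⟩ := Finset.card_pos.1 (by omega : 0 < t.card)
  exact Finset.disjoint_left.1 hdisj (ht1.2 hu) (ht2.2 hu)

private lemma triOut_union (hdisj : Disjoint S₁ S₂)
    (hsep : ∀ u ∈ S₁, ∀ v ∈ S₂, ¬ G.Adj u v) :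
    triOut G (S₁ ∪ S₂) = triOut G S₁ + triOut G S₂ := by
  unfold triOut
  have hinter : ∀ t : Finset V, (t ∩ (S₁ ∪ S₂)).card = (t ∩ S₁).card + (t ∩ S₂).card := by
    intro t
    rw [Finset.inter_union_distrib_left, Finset.card_union_of_disjoint]
    exact (hdisj.mono (Finset.inter_subset_right) (Finset.inter_subset_right))
  have hcong : (triangles G).filter (fun t => (t ∩ (S₁ ∪ S₂)).card = 2)
      = (triangles G).filter (fun t => (t ∩ S₁).card = 2 ∨ (t ∩ S₂).card = 2) := by
    apply Finset.filter_congr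
    intro t ht
    have he := triangle_inter_empty G S₁ S₂ hdisj hsep ht
    rw [hinter t]
    rcases he with he | he <;> rw [he] <;> simp <;> omega
  rw [hcong, Finset.filter_or, Finset.card_union_of_disjoint]
  rw [Finset.disjoint_left]
  intro t ht1 ht2
  simp only [Finset.mem_filter] at ht1 ht2
  rcases triangle_inter_empty G S₁ S₂ hdisj hsep ht1.1 with he | he <;>
    [rw [he] at ht1; rw [he] at ht2] <;> simp_all

private lemma card_ge_of_triIn_pos (h : 0 < triIn G S₁) : 3 ≤ S₁.card := by
  unfold triIn at h
  obtain ⟨t, ht⟩ := Finset.card_pos.1 h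
  simp only [Finset.mem_filter, triangles, Finset.mem_univ, true_and] at ht
  calc 3 = t.card := ht.1.1.symm
    _ ≤ S₁.card := Finset.card_le_card ht.2

end Graph

private lemma amgm_sqrt {p q : ℝ} (hp : 0 ≤ p) (hq : 0 ≤ q) :
    Real.sqrt (p * q) ≤ (p + q) / 2 := by
  have h1 : p * q ≤ ((p + q) / 2) ^ 2 := by nlinarith [sq_nonneg (p - q)]
  calc Real.sqrt (p * q) ≤ Real.sqrt (((p + q) / 2) ^ 2) := Real.sqrt_le_sqrt h1
    _ = (p + q) / 2 := Real.sqrt_sq (by positivity)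

private lemma core_ineq (i1 i2 M a b x y N : ℝ)
    (hM : 0 < M) (hab : a + b < N) (hxy : 0 < x + y)
    (h1 : i1 ^ 2 ≤ M * (a * x)) (h2 : i2 ^ 2 ≤ M * (b * y))
    (hi1 : 0 ≤ i1) (hi2 : 0 ≤ i2)
    (ha : 0 ≤ a) (hb : 0 ≤ b) (hx : 0 ≤ x) (hy : 0 ≤ y) :
    (i1 + i2) ^ 2 / (N * (x + y)) < M := by
  have hN : 0 < N := lt_of_le_of_lt (by positivity) hab
  rw [div_lt_iff₀ (by positivity)]
  have e1 : i1 ≤ Real.sqrt (M * (a * x)) := (Real.le_sqrt hi1 (by positivity)).2 h1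
  have e2 : i2 ≤ Real.sqrt (M * (b * y)) := (Real.le_sqrt hi2 (by positivity)).2 h2
  have e3 : i1 * i2 ≤ Real.sqrt (M * (a * x)) * Real.sqrt (M * (b * y)) :=
    mul_le_mul e1 e2 hi2 (Real.sqrt_nonneg _)
  have e4 : Real.sqrt (M * (a * x)) * Real.sqrt (M * (b * y))
      = Real.sqrt ((M * (a * y)) * (M * (b * x))) := by
    rw [← Real.sqrt_mul (by positivity)]
    ring_nf
  have e5 : i1 * i2 ≤ (M * (a * y) + M * (b * x)) / 2 :=
    le_trans (e4 ▸ e3) (amgm_sqrt (by positivity) (by positivity))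
  have key : (i1 + i2) ^ 2 ≤ M * ((a + b) * (x + y)) := by nlinarith
  have hlt : M * ((a + b) * (x + y)) < M * (N * (x + y)) := by
    apply mul_lt_mul_of_pos_left _ hM
    exact mul_lt_mul_of_pos_right hab hxy
  linarith

theorem cohesion_union_lt_max {V : Type*} [Fintype V]
    (G : SimpleGraph V) (S₁ S₂ : Finset V)
    (hdisj : Disjoint S₁ S₂)
    (h₁ : 2 ≤ S₁.card) (h₂ : 2 ≤ S₂.card)
    (hsep : ∀ u ∈ S₁, ∀ v ∈ S₂, ¬ G.Adj u v)
    (htri : 0 < triIn G (S₁ ∪ S₂)) :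
    cohesion G (S₁ ∪ S₂) < max (cohesion G S₁) (cohesion G S₂) := by
  have hAi := triIn_union G S₁ S₂ hdisj hsep
  have hAo := triOut_union G S₁ S₂ hdisj hsep
  have hcard : (S₁ ∪ S₂).card = S₁.card + S₂.card := Finset.card_union_of_disjoint hdisj
  set M : ℝ := max (cohesion G S₁) (cohesion G S₂) with hMdef
  have hC1 : cohesion G S₁ ≤ M := le_max_left _ _
  have hC2 : cohesion G S₂ ≤ M := le_max_right _ _
  have hCnn : ∀ S : Finset V, 0 ≤ cohesion G S := by
    intro S; unfold cohesion; positivity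
  have hMnn : 0 ≤ M := le_trans (hCnn S₁) hC1
  -- i_j^2 ≤ M * (a_j * x_j)
  have hbound : ∀ S : Finset V, cohesion G S ≤ M →
      (triIn G S : ℝ) ^ 2 ≤ M * ((S.card.choose 3 : ℝ) * ((triIn G S : ℝ) + (triOut G S : ℝ))) := by
    intro S hCS
    rcases Nat.eq_zero_or_pos (triIn G S) with h0 | hpos
    · rw [h0]; push_cast
      have hnn : (0:ℝ) ≤ M * ((S.card.choose 3 : ℝ) * ((0:ℝ) + (triOut G S : ℝ))) :=
        mul_nonneg hMnn (by positivity)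
      simpa using hnn
    · have h3 : 3 ≤ S.card := card_ge_of_triIn_pos G S hpos
      have hden : (0:ℝ) < (S.card.choose 3 : ℝ) * ((triIn G S : ℝ) + (triOut G S : ℝ)) := by
        have hch : 0 < S.card.choose 3 := Nat.choose_pos h3
        have : (0:ℝ) < (triIn G S : ℝ) := by exact_mod_cast hpos
        have : (0:ℝ) < (triIn G S : ℝ) + (triOut G S : ℝ) := by positivity
        have : (0:ℝ) < (S.card.choose 3 : ℝ) := by exact_mod_cast hch
        positivity
      have := hCS
      unfold cohesion at this
      calc (triIn G S : ℝ) ^ 2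
          = ((triIn G S : ℝ) ^ 2 / ((S.card.choose 3 : ℝ) * ((triIn G S : ℝ) + (triOut G S : ℝ))))
            * ((S.card.choose 3 : ℝ) * ((triIn G S : ℝ) + (triOut G S : ℝ))) := by
            exact (div_mul_cancel₀ _ hden.ne').symm
        _ ≤ M * ((S.card.choose 3 : ℝ) * ((triIn G S : ℝ) + (triOut G S : ℝ))) :=
            mul_le_mul_of_nonneg_right this hden.le
  have hb1 := hbound S₁ hC1
  have hb2 := hbound S₂ hC2
  -- M > 0
  have hM : 0 < M := by
    rw [hAi] at htri
    rcases Nat.eq_zero_or_pos (triIn G S₁) with h0 | hpos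
    · have hpos2 : 0 < triIn G S₂ := by omega
      have h3 : 3 ≤ S₂.card := card_ge_of_triIn_pos G S₂ hpos2
      have hnum : (0:ℝ) < (triIn G S₂ : ℝ) := by exact_mod_cast hpos2
      have hch : (0:ℝ) < (S₂.card.choose 3 : ℝ) := by exact_mod_cast Nat.choose_pos h3
      have hC2pos : 0 < cohesion G S₂ := by
        unfold cohesion
        apply div_pos (by positivity)
        have : (0:ℝ) ≤ (triOut G S₂ : ℝ) := by positivity
        positivity
      exact lt_of_lt_of_le hC2pos hC2
    · have h3 : 3 ≤ S₁.card := card_ge_of_triIn_pos G S₁ hpos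
      have hnum : (0:ℝ) < (triIn G S₁ : ℝ) := by exact_mod_cast hpos
      have hch : (0:ℝ) < (S₁.card.choose 3 : ℝ) := by exact_mod_cast Nat.choose_pos h3
      have hC1pos : 0 < cohesion G S₁ := by
        unfold cohesion
        apply div_pos (by positivity)
        have : (0:ℝ) ≤ (triOut G S₁ : ℝ) := by positivity
        positivity
      exact lt_of_lt_of_le hC1pos hC1
  -- choose inequality
  have hab : ((S₁.card.choose 3 : ℝ) + (S₂.card.choose 3 : ℝ)) < ((S₁ ∪ S₂).card.choose 3 : ℝ) := by
    rw [hcard]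
    exact_mod_cast choose3_add_lt h₁ h₂
  have hxy : (0:ℝ) < ((triIn G S₁ : ℝ) + (triOut G S₁ : ℝ)) + ((triIn G S₂ : ℝ) + (triOut G S₂ : ℝ)) := by
    have hiu : (0:ℝ) < (triIn G S₁ : ℝ) + (triIn G S₂ : ℝ) := by
      rw [hAi] at htri
      exact_mod_cast htri
    have h1 : (0:ℝ) ≤ (triOut G S₁ : ℝ) := by positivity
    have h2 : (0:ℝ) ≤ (triOut G S₂ : ℝ) := by positivity
    linarith
  have := core_ineq (triIn G S₁ : ℝ) (triIn G S₂ : ℝ) M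
    (S₁.card.choose 3 : ℝ) (S₂.card.choose 3 : ℝ)
    ((triIn G S₁ : ℝ) + (triOut G S₁ : ℝ)) ((triIn G S₂ : ℝ) + (triOut G S₂ : ℝ))
    ((S₁ ∪ S₂).card.choose 3 : ℝ)
    hM hab hxy hb1 hb2 (by positivity) (by positivity) (by positivity) (by positivity)
    (by positivity) (by positivity)
  unfold cohesion
  rw [hAi, hAo]
  push_cast
  convert this using 2 <;> ring
end
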